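/- Let 0 < q < 1 and α > 0 be real, w complex with |w| < 1, F an odd positive integer, a an integer with 1 ≤ a ≤ F, and n a nonnegative integer. Then the partial zeta function H_q^{(α)}(s, a, w | F) := (1+q) Σ_{m ≡ a (mod F), m > 0} (-1)^m w^m [m]_{q^α}^{-s} evaluated at s = -n satisfies H_q^{(α)}(-n, a, w | F) = ((1+q)/(1+q^F)) · (-1)^a w^a [F]_{q^α}^n · E_{n,q^F}^{(α, w^F)}(a/F), where E_{n,q^F}^{(α, w^F)}(x) := (1+q^F) Σ_{m=0}^∞ (-1)^m w^{Fm} [x+m]_{q^{αF}}^n. -/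

import Mathlib

/-- The weighted q-bracket `[y]_{q^α} = (1 - q^{αy})/(1 - q^α)`. -/
noncomputable def qbr (q α y : ℝ) : ℝ := (1 - q ^ (α * y)) / (1 - q ^ α)

/-- Modified twisted q-Euler polynomial
`E_{n,q^F}^{(α,w^F)}(x) = (1+q^F) Σ_{m≥0} (-1)^m w^{Fm} [x+m]_{q^{αF}}^n`. -/
noncomputable def EpolyF (q α : ℝ) (w : ℂ) (F n : ℕ) (x : ℝ) : ℂ :=
  (1 + (q : ℂ) ^ F) *
    ∑' m : ℕ, (-1 : ℂ) ^ m * w ^ (F * m) * ((qbr q (α * F) (x + m) : ℝ) : ℂ) ^ n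

lemma qbr_split (q α : ℝ) (hq0 : 0 < q) (hq1 : q < 1) (hα : 0 < α)
    (F : ℕ) (hF0 : 0 < F) (a k : ℕ) :
    qbr q α ((a : ℝ) + k * F) = qbr q α F * qbr q (α * F) ((a : ℝ) / F + k) := by
  unfold qbr
  have hF : (F : ℝ) ≠ 0 := Nat.cast_ne_zero.mpr hF0.ne'
  have h1 : α * F * ((a : ℝ) / F + k) = α * ((a : ℝ) + k * F) := by
    field_simp
  have h2 : q ^ (α * (F : ℝ)) ≠ 1 := by
    have : q ^ (α * (F : ℝ)) < 1 :=
      Real.rpow_lt_one hq0.le hq1 (by positivity)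
    linarith
  have h3 : q ^ α ≠ 1 := by
    have : q ^ α < 1 := Real.rpow_lt_one hq0.le hq1 hα
    linarith
  rw [h1]
  have h2' : 1 - q ^ (α * (F : ℝ)) ≠ 0 := sub_ne_zero.mpr (by
    intro h; exact h2 h.symm)
  have h3' : 1 - q ^ α ≠ 0 := sub_ne_zero.mpr (by intro h; exact h3 h.symm)
  field_simp

/-- Special value `H_q^{(α)}(-n,a,w|F) = ((1+q)/(1+q^F)) (-1)^a w^a [F]_{q^α}^n
  E_{n,q^F}^{(α,w^F)}(a/F)` of the q-partial zeta function. -/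
theorem partial_zeta_special_value (q α : ℝ) (hq0 : 0 < q) (hq1 : q < 1) (hα : 0 < α)
    (w : ℂ) (hw : ‖w‖ < 1) (F : ℕ) (hF : Odd F) (hF0 : 0 < F)
    (a : ℕ) (ha1 : 1 ≤ a) (ha2 : a ≤ F) (n : ℕ) :
    (1 + (q : ℂ)) *
        ∑' k : ℕ, (-1 : ℂ) ^ (a + k * F) * w ^ (a + k * F) *
          ((qbr q α ((a : ℝ) + k * F) : ℝ) : ℂ) ^ n
      = ((1 + (q : ℂ)) / (1 + (q : ℂ) ^ F)) * (-1 : ℂ) ^ a * w ^ a *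
          ((qbr q α F : ℝ) : ℂ) ^ n * EpolyF q α w F n ((a : ℝ) / F) := by
  have hqF : (1 : ℂ) + (q : ℂ) ^ F ≠ 0 := by
    have h : (0 : ℝ) < 1 + q ^ F := by positivity
    have : ((1 + q ^ F : ℝ) : ℂ) ≠ 0 := by exact_mod_cast h.ne'
    simpa using this
  have hterm : ∀ k : ℕ, (-1 : ℂ) ^ (a + k * F) * w ^ (a + k * F) *
          ((qbr q α ((a : ℝ) + k * F) : ℝ) : ℂ) ^ n
      = ((-1 : ℂ) ^ a * w ^ a * ((qbr q α F : ℝ) : ℂ) ^ n) *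
        ((-1 : ℂ) ^ k * w ^ (F * k) *
          ((qbr q (α * F) ((a : ℝ) / F + k) : ℝ) : ℂ) ^ n) := by
    intro k
    rw [qbr_split q α hq0 hq1 hα F hF0 a k]
    have hsgn : (-1 : ℂ) ^ (k * F) = (-1 : ℂ) ^ k := by
      rw [mul_comm, pow_mul, hF.neg_one_pow]
    have hw' : w ^ (a + k * F) = w ^ a * w ^ (F * k) := by
      rw [pow_add, mul_comm k F]
    rw [pow_add, hsgn, hw']
    push_cast
    rw [mul_pow]
    ring
  rw [tsum_congr hterm, tsum_mul_left, EpolyF]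
  field_simp
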